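/- Let P be positive definite with PA + A'P ≤ 0, C a p×n matrix such that the pair (C, A) is detectable (i.e., every solution ω of ω̇ = Aω with Cω ≡ 0 converges to 0), and α > 0. Then the matrix A - αP⁻¹C'C is Hurwitz: all its eigenvalues have negative real part. -/

import Mathlib

open Matrix Filter Topology

private lemma dot_self_nonneg {m : ℕ} (u : Fin m → ℝ) : 0 ≤ u ⬝ᵥ u :=
  Finset.sum_nonneg fun i _ => mul_self_nonneg _

set_option maxHeartbeats 1000000 in
/-- dissipativity plus detectability of (C,A) implies that
A - αP⁻¹C'C is Hurwitz for every α > 0. -/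
theorem stmt1 {n p : ℕ}
    (P A : Matrix (Fin n) (Fin n) ℝ) (C : Matrix (Fin p) (Fin n) ℝ)
    (hP : P.PosDef)
    (hdiss : ∀ x : Fin n → ℝ, x ⬝ᵥ (P * A + Aᵀ * P) *ᵥ x ≤ 0)
    (hdet : ∀ ω : ℝ → Fin n → ℝ,
      (∀ t, HasDerivAt ω (A *ᵥ ω t) t) →
      (∀ t, 0 ≤ t → C *ᵥ ω t = 0) →
      Tendsto ω atTop (𝓝 0))
    (α : ℝ) (hα : 0 < α) :
    ∀ μ ∈ spectrum ℂ ((A - α • (P⁻¹ * Cᵀ * C)).map (Complex.ofReal)),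
      μ.re < 0 := by
  intro μ hμ
  set M : Matrix (Fin n) (Fin n) ℝ := A - α • (P⁻¹ * Cᵀ * C) with hMdef
  -- extract an eigenvector
  rw [← AlgEquiv.spectrum_eq (Matrix.toLinAlgEquiv' :
      Matrix (Fin n) (Fin n) ℂ ≃ₐ[ℂ] ((Fin n → ℂ) →ₗ[ℂ] (Fin n → ℂ)))] at hμ
  obtain ⟨v, hv⟩ :=
    (Module.End.hasEigenvalue_iff_mem_spectrum.mpr hμ).exists_hasEigenvector
  have hv0 : v ≠ 0 := hv.2
  have hvv : (M.map Complex.ofReal) *ᵥ v = μ • v := by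
    have := hv.apply_eq_smul
    rwa [Matrix.toLinAlgEquiv'_apply] at this
  set x : Fin n → ℝ := fun i => (v i).re with hxdef
  set y : Fin n → ℝ := fun i => (v i).im with hydef
  set a : ℝ := μ.re with hadef
  set b : ℝ := μ.im with hbdef
  -- real and imaginary parts of the eigenvalue equation
  have hMx : M *ᵥ x = a • x - b • y := by
    funext i
    have h := congrArg Complex.re (congrFun hvv i)
    simp only [Matrix.mulVec, dotProduct, Matrix.map_apply, Complex.re_sum,
      Complex.mul_re, Complex.ofReal_re, Complex.ofReal_im, zero_mul, mul_zero, sub_zero,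
      Pi.smul_apply, smul_eq_mul] at h
    simp only [Matrix.mulVec, dotProduct, Pi.sub_apply, Pi.smul_apply,
      smul_eq_mul, hxdef, hydef, hadef, hbdef]
    rw [h]
  have hMy : M *ᵥ y = b • x + a • y := by
    funext i
    have h := congrArg Complex.im (congrFun hvv i)
    simp only [Matrix.mulVec, dotProduct, Matrix.map_apply, Complex.im_sum,
      Complex.mul_im, Complex.ofReal_re, Complex.ofReal_im, zero_mul, mul_zero, add_zero,
      Pi.smul_apply, smul_eq_mul] at h
    simp only [Matrix.mulVec, dotProduct, Pi.add_apply, Pi.smul_apply,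
      smul_eq_mul, hxdef, hydef, hadef, hbdef]
    rw [h]; ring
  have hxy : x ≠ 0 ∨ y ≠ 0 := by
    by_contra h
    push_neg at h
    apply hv0
    funext i
    have h1 : x i = 0 := by rw [h.1]; rfl
    have h2 : y i = 0 := by rw [h.2]; rfl
    exact Complex.ext h1 h2
  -- symmetry of P
  have hPsymm : Pᵀ = P := (by simpa using hP.1 : P.IsSymm)
  have hsym : ∀ u w : Fin n → ℝ, u ⬝ᵥ P *ᵥ w = w ⬝ᵥ P *ᵥ u := by
    intro u w
    rw [Matrix.dotProduct_mulVec, ← Matrix.mulVec_transpose, hPsymm, dotProduct_comm]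
  have hq : 0 < x ⬝ᵥ P *ᵥ x + y ⬝ᵥ P *ᵥ y := by
    have h2 : 0 ≤ y ⬝ᵥ P *ᵥ y := by simpa using hP.posSemidef.dotProduct_mulVec_nonneg y
    have h1 : 0 ≤ x ⬝ᵥ P *ᵥ x := by simpa using hP.posSemidef.dotProduct_mulVec_nonneg x
    rcases hxy with hx | hy
    · have := hP.dotProduct_mulVec_pos hx; simp only [star_trivial] at this; linarith
    · have := hP.dotProduct_mulVec_pos hy; simp only [star_trivial] at this; linarith
  -- key matrix identity
  have hPinv : P * P⁻¹ = 1 := Matrix.mul_nonsing_inv P (isUnit_iff_ne_zero.mpr hP.det_pos.ne')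
  have hinvP : P⁻¹ * P = 1 := Matrix.nonsing_inv_mul P (isUnit_iff_ne_zero.mpr hP.det_pos.ne')
  have hkey : P * M + Mᵀ * P = (P * A + Aᵀ * P) - (2 * α) • (Cᵀ * C) := by
    have h1 : P * (α • (P⁻¹ * Cᵀ * C)) = α • (Cᵀ * C) := by
      rw [Matrix.mul_smul, ← Matrix.mul_assoc, ← Matrix.mul_assoc, hPinv, Matrix.one_mul]
    have h2 : (α • (P⁻¹ * Cᵀ * C))ᵀ * P = α • (Cᵀ * C) := by
      rw [Matrix.transpose_smul, Matrix.smul_mul]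
      congr 1
      rw [Matrix.transpose_mul, Matrix.transpose_mul, Matrix.transpose_transpose,
        Matrix.transpose_nonsing_inv, hPsymm, Matrix.mul_assoc, Matrix.mul_assoc,
        hinvP, Matrix.mul_one]
    rw [hMdef, Matrix.mul_sub, Matrix.transpose_sub, Matrix.sub_mul, h1, h2]
    rw [two_mul, add_smul]
    abel
  -- quadratic form computations
  have e1 : ∀ u w : Fin n → ℝ, u ⬝ᵥ (P * M) *ᵥ w = (M *ᵥ w) ⬝ᵥ P *ᵥ u := by
    intro u w
    rw [← Matrix.mulVec_mulVec, hsym]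
  have e2 : ∀ u w : Fin n → ℝ, u ⬝ᵥ (Mᵀ * P) *ᵥ w = (M *ᵥ u) ⬝ᵥ P *ᵥ w := by
    intro u w
    rw [← Matrix.mulVec_mulVec, Matrix.dotProduct_mulVec, Matrix.vecMul_transpose]
  have hS : x ⬝ᵥ (P * M + Mᵀ * P) *ᵥ x + y ⬝ᵥ (P * M + Mᵀ * P) *ᵥ y
      = 2 * a * (x ⬝ᵥ P *ᵥ x + y ⬝ᵥ P *ᵥ y) := by
    simp only [Matrix.add_mulVec, dotProduct_add, e1, e2, hMx, hMy,
      sub_dotProduct, add_dotProduct, smul_dotProduct, smul_eq_mul]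
    rw [hsym y x]
    ring
  have hCC : ∀ u : Fin n → ℝ, u ⬝ᵥ (Cᵀ * C) *ᵥ u = (C *ᵥ u) ⬝ᵥ (C *ᵥ u) := by
    intro u
    rw [← Matrix.mulVec_mulVec, Matrix.dotProduct_mulVec, Matrix.vecMul_transpose]
  have hmain : 2 * a * (x ⬝ᵥ P *ᵥ x + y ⬝ᵥ P *ᵥ y)
      = (x ⬝ᵥ (P * A + Aᵀ * P) *ᵥ x + y ⬝ᵥ (P * A + Aᵀ * P) *ᵥ y)
        - 2 * α * ((C *ᵥ x) ⬝ᵥ (C *ᵥ x) + (C *ᵥ y) ⬝ᵥ (C *ᵥ y)) := by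
    rw [← hS, hkey]
    simp only [Matrix.sub_mulVec, dotProduct_sub, Matrix.smul_mulVec,
      dotProduct_smul, smul_eq_mul, hCC]
    ring
  -- suppose a ≥ 0, derive contradiction
  by_contra hre
  push_neg at hre
  have hd1 := hdiss x
  have hd2 := hdiss y
  have hc1 := dot_self_nonneg (C *ᵥ x)
  have hc2 := dot_self_nonneg (C *ᵥ y)
  have haq : 0 ≤ a * (x ⬝ᵥ P *ᵥ x + y ⬝ᵥ P *ᵥ y) := mul_nonneg hre hq.le
  have hcsum : (C *ᵥ x) ⬝ᵥ (C *ᵥ x) + (C *ᵥ y) ⬝ᵥ (C *ᵥ y) ≤ 0 := by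
    nlinarith [hmain, hd1, hd2, haq, hα]
  have h01 : (C *ᵥ x) ⬝ᵥ (C *ᵥ x) = 0 := le_antisymm (by linarith) hc1
  have h02 : (C *ᵥ y) ⬝ᵥ (C *ᵥ y) = 0 := le_antisymm (by linarith) hc2
  have hCx : C *ᵥ x = 0 := dotProduct_self_eq_zero.mp h01
  have hCy : C *ᵥ y = 0 := dotProduct_self_eq_zero.mp h02
  have ha0 : a = 0 := by nlinarith [hmain, hd1, hd2, hq, hre, h01, h02]
  -- eigen relations for A
  have hzero : ∀ u : Fin n → ℝ, C *ᵥ u = 0 → (P⁻¹ * Cᵀ * C) *ᵥ u = 0 := by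
    intro u hu
    rw [← Matrix.mulVec_mulVec, hu, Matrix.mulVec_zero]
  have hAx : A *ᵥ x = -(b • y) := by
    have h := hMx
    rw [hMdef, Matrix.sub_mulVec, Matrix.smul_mulVec, hzero x hCx, smul_zero,
      sub_zero] at h
    rw [h, ha0, zero_smul, zero_sub]
  have hAy : A *ᵥ y = b • x := by
    have h := hMy
    rw [hMdef, Matrix.sub_mulVec, Matrix.smul_mulVec, hzero y hCy, smul_zero,
      sub_zero] at h
    rw [h, ha0, zero_smul, add_zero]
  -- the two undamped solutions
  have hbt : ∀ t : ℝ, HasDerivAt (fun s : ℝ => b * s) b t := by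
    intro t
    simpa using (hasDerivAt_id t).const_mul b
  have hωd : ∀ t, HasDerivAt (fun s => Real.cos (b*s) • x - Real.sin (b*s) • y)
      (A *ᵥ ((fun s => Real.cos (b*s) • x - Real.sin (b*s) • y) t)) t := by
    intro t
    have hcos : HasDerivAt (fun s => Real.cos (b*s)) (-Real.sin (b*t) * b) t :=
      (Real.hasDerivAt_cos (b*t)).comp t (hbt t)
    have hsin : HasDerivAt (fun s => Real.sin (b*s)) (Real.cos (b*t) * b) t :=
      (Real.hasDerivAt_sin (b*t)).comp t (hbt t)
    have hD := (hcos.smul_const x).sub (hsin.smul_const y)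
    convert hD using 1
    show A *ᵥ (Real.cos (b*t) • x - Real.sin (b*t) • y) = _
    rw [Matrix.mulVec_sub, Matrix.mulVec_smul, Matrix.mulVec_smul, hAx, hAy]
    funext i
    simp only [Pi.sub_apply, Pi.smul_apply, Pi.neg_apply, smul_eq_mul]
    ring
    all_goals rfl
  have hσd : ∀ t, HasDerivAt (fun s => Real.sin (b*s) • x + Real.cos (b*s) • y)
      (A *ᵥ ((fun s => Real.sin (b*s) • x + Real.cos (b*s) • y) t)) t := by
    intro t
    have hcos : HasDerivAt (fun s => Real.cos (b*s)) (-Real.sin (b*t) * b) t :=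
      (Real.hasDerivAt_cos (b*t)).comp t (hbt t)
    have hsin : HasDerivAt (fun s => Real.sin (b*s)) (Real.cos (b*t) * b) t :=
      (Real.hasDerivAt_sin (b*t)).comp t (hbt t)
    have hD := (hsin.smul_const x).add (hcos.smul_const y)
    convert hD using 1
    show A *ᵥ (Real.sin (b*t) • x + Real.cos (b*t) • y) = _
    rw [Matrix.mulVec_add, Matrix.mulVec_smul, Matrix.mulVec_smul, hAx, hAy]
    funext i
    simp only [Pi.add_apply, Pi.smul_apply, Pi.neg_apply, smul_eq_mul]
    ring
    all_goals rfl
  have hωc : ∀ t : ℝ, (0:ℝ) ≤ t → C *ᵥ ((fun s => Real.cos (b*s) • x - Real.sin (b*s) • y) t) = 0 := by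
    intro t _
    show C *ᵥ (Real.cos (b*t) • x - Real.sin (b*t) • y) = 0
    rw [Matrix.mulVec_sub, Matrix.mulVec_smul, Matrix.mulVec_smul, hCx, hCy,
      smul_zero, smul_zero, sub_zero]
  have hσc : ∀ t : ℝ, (0:ℝ) ≤ t → C *ᵥ ((fun s => Real.sin (b*s) • x + Real.cos (b*s) • y) t) = 0 := by
    intro t _
    show C *ᵥ (Real.sin (b*t) • x + Real.cos (b*t) • y) = 0
    rw [Matrix.mulVec_add, Matrix.mulVec_smul, Matrix.mulVec_smul, hCx, hCy,
      smul_zero, smul_zero, add_zero]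
  have hωlim := hdet _ hωd hωc
  have hσlim := hdet _ hσd hσc
  -- the invariant quadratic form
  have hQ : Continuous (fun w : Fin n → ℝ => w ⬝ᵥ P *ᵥ w) :=
    continuous_id.dotProduct (continuous_const.matrix_mulVec continuous_id)
  have h1 := (hQ.tendsto 0).comp hωlim
  have h2 := (hQ.tendsto 0).comp hσlim
  have hlim := h1.add h2
  simp only [Function.comp_def, Matrix.mulVec_zero, dotProduct_zero, add_zero] at hlim
  have hconst : ∀ t : ℝ,
        ((Real.cos (b*t) • x - Real.sin (b*t) • y) ⬝ᵥ P *ᵥ (Real.cos (b*t) • x - Real.sin (b*t) • y))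
      + ((Real.sin (b*t) • x + Real.cos (b*t) • y) ⬝ᵥ P *ᵥ (Real.sin (b*t) • x + Real.cos (b*t) • y))
      = x ⬝ᵥ P *ᵥ x + y ⬝ᵥ P *ᵥ y := by
    intro t
    simp only [Matrix.mulVec_sub, Matrix.mulVec_add, Matrix.mulVec_smul,
      dotProduct_sub, dotProduct_add, sub_dotProduct,
      add_dotProduct, smul_dotProduct, dotProduct_smul, smul_eq_mul]
    rw [hsym y x]
    linear_combination (Real.sin_sq_add_cos_sq (b*t)) * (x ⬝ᵥ P *ᵥ x + y ⬝ᵥ P *ᵥ y)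
  have hlim2 : Tendsto (fun _ : ℝ => x ⬝ᵥ P *ᵥ x + y ⬝ᵥ P *ᵥ y) atTop (𝓝 0) :=
    hlim.congr hconst
  have := tendsto_nhds_unique hlim2 tendsto_const_nhds
  linarith
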